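/- arXiv:1702.03101 — 2 statements merged into one kernel-verified Lean document; each statement's English description precedes it below -/
import Mathlib

section
/- κ_n ≥ ⌊n/2⌋ for all n ∈ ℕ, where κ_n is the maximum of κ(F,W) over all BANs F: B^n → B^n and block-sequential update schedules W. -/
/-- A configuration of a Boolean automata network of size `n`. -/
abbrev Conf (n : ℕ) := Fin n → Bool

/-- `F_I`: update simultaneously exactly the automata in `I`. -/
def updSet {n : ℕ} (F : Conf n → Conf n) (I : Finset (Fin n)) (x : Conf n) : Conf n :=
  fun i => if i ∈ I then F x i else x i

/-- `W_{<j}`: union of the first `j` blocks of the schedule `W`. -/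
def prefUnion {n : ℕ} (W : List (Finset (Fin n))) (j : ℕ) : Finset (Fin n) :=
  (W.take j).foldr (· ∪ ·) ∅

/-- `W` is a block-sequential update schedule: an ordered partition of the automata. -/
def isSchedule {n : ℕ} (W : List (Finset (Fin n))) : Prop :=
  (∀ B ∈ W, B.Nonempty) ∧ W.Pairwise Disjoint ∧ W.foldr (· ∪ ·) ∅ = Finset.univ

/-- Confusable configurations: identical after updating the first `i` blocks, some `i ∈ [0,p]`. -/
def confusable {n : ℕ} (F : Conf n → Conf n) (W : List (Finset (Fin n))) (x x' : Conf n) : Prop :=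
  ∃ i ≤ W.length, updSet F (prefUnion W i) x = updSet F (prefUnion W i) x'

/-- `CC(x,x')`: the set of steps making `x` and `x'` confusable. -/
def CCset {n : ℕ} (F : Conf n → Conf n) (W : List (Finset (Fin n))) (x x' : Conf n) : Set ℕ :=
  {i | i ≤ W.length ∧ updSet F (prefUnion W i) x = updSet F (prefUnion W i) x'}

/-- The `G_NECC` graph: edges between non-equivalent confusable configurations. -/
def gnecc {n : ℕ} (F : Conf n → Conf n) (W : List (Finset (Fin n))) :
    SimpleGraph (Conf n) where
  Adj x x' := F x ≠ F x' ∧ confusable F W x x'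
  symm := ⟨by
    rintro x x' ⟨hne, i, hi, h⟩
    exact ⟨hne.symm, i, hi, h.symm⟩⟩
  loopless := ⟨by rintro x ⟨hne, _⟩; exact hne rfl⟩

/-- `F^W`: apply the blocks of `W` sequentially. -/
def runSched {n : ℕ} (F : Conf n → Conf n) (W : List (Finset (Fin n))) (x : Conf n) : Conf n :=
  W.foldl (fun y B => updSet F B y) x

/-- `W(i)`: the index of the block of `W` containing `i`. -/
def stepOf {n : ℕ} (W : List (Finset (Fin n))) (i : Fin n) : ℕ :=
  W.findIdx (fun B => decide (i ∈ B))

/-- `W' ∈ E_h(W,V')`: `W'` extends `W`, preserving the update order via `h`. -/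
def extendsSched {n m : ℕ} (W : List (Finset (Fin n))) (W' : List (Finset (Fin m)))
    (h : Fin n → Fin m) : Prop :=
  ∀ i i' : Fin n, (stepOf W i ≤ stepOf W i' ↔ stepOf W' (h i) ≤ stepOf W' (h i'))

/-- `(F',W')` `h`-simulates `(F,[V])`: `φ_h ∘ F'^{W'} = F ∘ φ_h`. -/
def simulates {n m : ℕ} (F' : Conf m → Conf m) (W' : List (Finset (Fin m)))
    (F : Conf n → Conf n) (h : Fin n → Fin m) : Prop :=
  ∀ z : Conf m, (fun i => runSched F' W' z (h i)) = F (fun i => z (h i))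

/-- `κ(F,W)`: minimal number of additional automata needed to simulate `(F,[V])`
with a schedule extending `W` order-preservingly. -/
noncomputable def kappa {n : ℕ} (F : Conf n → Conf n) (W : List (Finset (Fin n))) : ℕ :=
  sInf {k | ∃ h : Fin n → Fin (n + k), Function.Injective h ∧
    ∃ W' : List (Finset (Fin (n + k))), isSchedule W' ∧ extendsSched W W' h ∧
      ∃ F' : Conf (n + k) → Conf (n + k), simulates F' W' F h}

/-- The simple sequential update schedule `({0},{1},…,{n-1})`. -/
def seqSched (n : ℕ) : List (Finset (Fin n)) := (List.finRange n).map (fun i => {i})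

-- general lemmas

lemma mem_foldr_union_iff {n : ℕ} {L : List (Finset (Fin n))} {v : Fin n} :
    v ∈ L.foldr (· ∪ ·) ∅ ↔ ∃ B ∈ L, v ∈ B := by
  induction L with
  | nil => simp
  | cons B L ih => simp [ih]

lemma stepOf_lt_length {n : ℕ} {W : List (Finset (Fin n))} (hs : isSchedule W) (v : Fin n) :
    stepOf W v < W.length := by
  apply List.findIdx_lt_length.mpr
  have : v ∈ W.foldr (· ∪ ·) ∅ := by rw [hs.2.2]; exact Finset.mem_univ v
  obtain ⟨B, hB, hvB⟩ := mem_foldr_union_iff.mp this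
  exact ⟨B, hB, by simpa using hvB⟩

lemma mem_stepOf_block' {n : ℕ} {W : List (Finset (Fin n))} {v : Fin n}
    (h : stepOf W v < W.length) : v ∈ W[stepOf W v]'h := by
  have := @List.findIdx_getElem _ (fun B => decide (v ∈ B)) W h
  exact of_decide_eq_true this

lemma mem_stepOf_block {n : ℕ} {W : List (Finset (Fin n))} (hs : isSchedule W) (v : Fin n) :
    v ∈ W[stepOf W v]'(stepOf_lt_length hs v) := mem_stepOf_block' _

def pr {n : ℕ} (F : Conf n → Conf n) (W : List (Finset (Fin n))) (t : ℕ) (z : Conf n) : Conf n :=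
  (W.take t).foldl (fun y B => updSet F B y) z

lemma pr_succ {n : ℕ} {F : Conf n → Conf n} {W : List (Finset (Fin n))} {t : ℕ}
    (ht : t < W.length) (z : Conf n) :
    pr F W (t+1) z = updSet F (W[t]'ht) (pr F W t z) := by
  unfold pr
  rw [List.take_succ, List.foldl_append]
  simp [List.getElem?_eq_getElem ht]

lemma pr_succ_ge {n : ℕ} {F : Conf n → Conf n} {W : List (Finset (Fin n))} {t : ℕ}
    (ht : W.length ≤ t) (z : Conf n) : pr F W (t+1) z = pr F W t z := by
  unfold pr
  rw [List.take_of_length_le ht, List.take_of_length_le (by omega)]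

lemma pr_eq_self {n : ℕ} {F : Conf n → Conf n} {W : List (Finset (Fin n))} {v : Fin n} :
    ∀ {t : ℕ}, t ≤ stepOf W v → ∀ z, pr F W t z v = z v := by
  intro t
  induction t with
  | zero => intro _ z; rfl
  | succ t ih =>
    intro ht z
    have hstep : stepOf W v ≤ W.length := List.findIdx_le_length
    have ht' : t < W.length := by omega
    rw [pr_succ ht']
    have hnot : v ∉ W[t]'ht' := by
      have htlt : t < stepOf W v := by omega
      simp only [stepOf] at htlt
      have := List.not_of_lt_findIdx (p := fun B => decide (v ∈ B)) (xs := W) (i := t) htlt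
      simpa using this
    rw [updSet]
    simp only [hnot, if_false]
    exact ih (by omega) z

lemma pr_stable {n : ℕ} {F : Conf n → Conf n} {W : List (Finset (Fin n))} {v : Fin n}
    (hs : isSchedule W) :
    ∀ {t : ℕ}, stepOf W v < t → ∀ z, pr F W t z v = pr F W (stepOf W v + 1) z v := by
  intro t
  induction t with
  | zero => omega
  | succ t ih =>
    intro ht z
    rcases Nat.lt_or_ge (stepOf W v) t with h1 | h1
    · rcases Nat.lt_or_ge t W.length with h2 | h2
      · rw [pr_succ h2]
        have hnot : v ∉ W[t]'h2 := by
          intro hmem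
          have hd := List.pairwise_iff_getElem.mp hs.2.1 (stepOf W v) t (stepOf_lt_length hs v) h2 h1
          exact (Finset.disjoint_left.mp hd (mem_stepOf_block hs v)) hmem
        rw [updSet]
        simp only [hnot, if_false]
        exact ih h1 z
      · rw [pr_succ_ge h2]; exact ih h1 z
    · have : stepOf W v = t := by omega
      rw [this]

lemma runSched_eq_pr {n : ℕ} (F : Conf n → Conf n) (W : List (Finset (Fin n))) (z : Conf n) :
    runSched F W z = pr F W W.length z := by
  unfold runSched pr
  rw [List.take_length]

lemma pr_eq_run {n : ℕ} {F : Conf n → Conf n} {W : List (Finset (Fin n))} {v : Fin n} {t : ℕ}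
    (hs : isSchedule W) (hv : stepOf W v < t) (z : Conf n) :
    pr F W t z v = runSched F W z v := by
  rw [runSched_eq_pr, pr_stable hs hv z, pr_stable hs (stepOf_lt_length hs v) z]

lemma runSched_eq_of_pr_eq {n : ℕ} {F : Conf n → Conf n} {W : List (Finset (Fin n))} {t : ℕ}
    {z₁ z₂ : Conf n} (h : pr F W t z₁ = pr F W t z₂) :
    runSched F W z₁ = runSched F W z₂ := by
  have key : ∀ z, runSched F W z = (W.drop t).foldl (fun y B => updSet F B y) (pr F W t z) := by
    intro z
    unfold runSched pr
    conv_lhs => rw [← List.take_append_drop t W]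
    rw [List.foldl_append]
  rw [key z₁, key z₂, h]

lemma mem_prefUnion {n : ℕ} {W : List (Finset (Fin n))} {i : ℕ} {v : Fin n} :
    v ∈ prefUnion W i ↔ stepOf W v < min i W.length := by
  constructor
  · intro hv
    obtain ⟨B, hB, hvB⟩ := mem_foldr_union_iff.mp hv
    have h1 : (W.take i).findIdx (fun B => decide (v ∈ B)) < (W.take i).length :=
      List.findIdx_lt_length.mpr ⟨B, hB, by simpa using hvB⟩
    have h2 := List.IsPrefix.findIdx_eq_of_findIdx_lt_length (p := fun B => decide (v ∈ B))
      (List.take_prefix i W) h1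
    rw [List.length_take] at h1
    unfold stepOf
    omega
  · intro hv
    have h1 : stepOf W v < W.length := by omega
    have h2 : stepOf W v < (W.take i).length := by rw [List.length_take]; omega
    apply mem_foldr_union_iff.mpr
    refine ⟨(W.take i)[stepOf W v]'h2, List.getElem_mem _, ?_⟩
    rw [List.getElem_take]
    exact mem_stepOf_block' h1

lemma length_seqSched (n : ℕ) : (seqSched n).length = n := by simp [seqSched]

lemma isSchedule_seqSched (n : ℕ) : isSchedule (seqSched n) := by
  refine ⟨?_, ?_, ?_⟩
  · intro B hB
    simp only [seqSched, List.mem_map] at hB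
    obtain ⟨i, _, rfl⟩ := hB
    exact ⟨i, Finset.mem_singleton_self i⟩
  · rw [seqSched, List.pairwise_map]
    apply List.Pairwise.imp (fun {a b} (hab : a ≠ b) => ?_) (List.nodup_finRange n)
    simp [Finset.disjoint_left, hab]
  · ext v
    simp only [Finset.mem_univ, iff_true, mem_foldr_union_iff, seqSched, List.mem_map]
    exact ⟨{v}, ⟨v, List.mem_finRange v, rfl⟩, Finset.mem_singleton_self v⟩

lemma stepOf_seqSched {n : ℕ} (v : Fin n) : stepOf (seqSched n) v = v.val := by
  unfold stepOf
  rw [List.findIdx_eq (by simp [seqSched, v.isLt])]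
  constructor
  · simp [seqSched, List.getElem_finRange, Fin.ext_iff]
  · intro j hj
    have hjn : j < n := by omega
    simp [seqSched, List.getElem_finRange, Fin.ext_iff, hjn]
    omega

lemma mem_prefUnion_seqSched {n : ℕ} {i : ℕ} {v : Fin n} :
    v ∈ prefUnion (seqSched n) i ↔ v.val < i := by
  rw [mem_prefUnion, stepOf_seqSched, length_seqSched]
  have := v.isLt
  omega

/-- The hard network: first half gets constant `false`, second half copies the first half. -/
def hardF (n : ℕ) : Conf n → Conf n := fun x j =>
  if h : n / 2 ≤ (j : ℕ) ∧ (j : ℕ) < n / 2 + n / 2 then x ⟨(j : ℕ) - n / 2, by omega⟩ else false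

/-- Embed a configuration of the first half. -/
def emb (n : ℕ) (y : Conf (n / 2)) : Conf n := fun j =>
  if h : (j : ℕ) < n / 2 then y ⟨j, h⟩ else false

lemma hardF_low {n : ℕ} (x : Conf n) {j : Fin n} (hj : (j : ℕ) < n / 2) :
    hardF n x j = false := by
  rw [hardF, dif_neg]; omega

lemma hardF_emb {n : ℕ} (y : Conf (n / 2)) (t : Fin (n / 2)) :
    hardF n (emb n y) ⟨n / 2 + t.val, by omega⟩ = y t := by
  have ht := t.isLt
  rw [hardF, dif_pos (by simp)]
  rw [emb, dif_pos (by simp)]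
  congr 1
  ext
  simp

lemma hardF_emb_inj {n : ℕ} {y y' : Conf (n / 2)}
    (h : hardF n (emb n y) = hardF n (emb n y')) : y = y' := by
  funext t
  rw [← hardF_emb y t, ← hardF_emb y' t, h]

section Copy

variable {n : ℕ}

/-- The copy network on `n + n` automata. -/
def copyF (F : Conf n → Conf n) : Conf (n + n) → Conf (n + n) := fun z v =>
  if hv : (v : ℕ) < n then F (fun t => z (Fin.natAdd n t)) ⟨v, hv⟩
  else z ⟨(v : ℕ) - n, by omega⟩

def copyBlock (n : ℕ) : Finset (Fin (n + n)) := Finset.univ.image (Fin.natAdd n)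

def copySched (W : List (Finset (Fin n))) : List (Finset (Fin (n + n))) :=
  copyBlock n :: W.map (fun B => B.image (Fin.castAdd n))

lemma mem_copyBlock {v : Fin (n + n)} : v ∈ copyBlock n ↔ n ≤ (v : ℕ) := by
  simp only [copyBlock, Finset.mem_image, Finset.mem_univ, true_and]
  constructor
  · rintro ⟨a, rfl⟩; simp [Fin.natAdd]
  · intro hv; exact ⟨⟨(v : ℕ) - n, by omega⟩, by ext; simp [Fin.natAdd]; omega⟩

lemma mem_castImage {B : Finset (Fin n)} {v : Fin (n + n)} :
    v ∈ B.image (Fin.castAdd n) ↔ ∃ a ∈ B, Fin.castAdd n a = v := Finset.mem_image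

lemma castAdd_mem_image {B : Finset (Fin n)} {i : Fin n} :
    Fin.castAdd n i ∈ B.image (Fin.castAdd n) ↔ i ∈ B := by
  rw [Finset.mem_image]
  constructor
  · rintro ⟨a, ha, hai⟩
    rwa [← Fin.castAdd_injective _ _ hai]
  · intro hi; exact ⟨i, hi, rfl⟩

lemma isSchedule_copySched {W : List (Finset (Fin n))} (hn : 0 < n) (hW : isSchedule W) :
    isSchedule (copySched W) := by
  refine ⟨?_, ?_, ?_⟩
  · intro B hB
    rcases List.mem_cons.mp hB with rfl | hB
    · exact ⟨Fin.natAdd n ⟨0, hn⟩, mem_copyBlock.mpr (by simp [Fin.natAdd])⟩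
    · simp only [List.mem_map] at hB
      obtain ⟨C, hC, rfl⟩ := hB
      exact (hW.1 C hC).image _
  · rw [copySched, List.pairwise_cons]
    constructor
    · intro B hB
      simp only [List.mem_map] at hB
      obtain ⟨C, _, rfl⟩ := hB
      rw [Finset.disjoint_left]
      intro v hv hv'
      obtain ⟨a, _, rfl⟩ := Finset.mem_image.mp hv'
      have := mem_copyBlock.mp hv
      simp [Fin.castAdd] at this
      omega
    · rw [List.pairwise_map]
      exact hW.2.1.imp (fun hab => (Finset.disjoint_image (Fin.castAdd_injective _ _)).mpr hab)
  · ext v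
    simp only [Finset.mem_univ, iff_true, copySched, mem_foldr_union_iff]
    by_cases hv : (v : ℕ) < n
    · have hv' : v = Fin.castAdd n ⟨(v : ℕ), hv⟩ := by ext; simp
      have : (⟨(v : ℕ), hv⟩ : Fin n) ∈ W.foldr (· ∪ ·) ∅ := by
        rw [hW.2.2]; exact Finset.mem_univ _
      obtain ⟨B, hB, hmem⟩ := mem_foldr_union_iff.mp this
      exact ⟨B.image (Fin.castAdd n), List.mem_cons_of_mem _ (List.mem_map_of_mem hB),
        hv' ▸ Finset.mem_image_of_mem _ hmem⟩
    · exact ⟨copyBlock n, List.mem_cons_self, mem_copyBlock.mpr (by omega)⟩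

lemma stepOf_copySched {W : List (Finset (Fin n))} (i : Fin n) :
    stepOf (copySched W) (Fin.castAdd n i) = stepOf W i + 1 := by
  unfold stepOf copySched
  rw [List.findIdx_cons]
  have h1 : decide (Fin.castAdd n i ∈ copyBlock n) = false := by
    simp [mem_copyBlock, Fin.castAdd]
  rw [h1]
  simp only [cond_false]
  congr 1
  have : ∀ (L : List (Finset (Fin n))),
      (L.map (fun B => B.image (Fin.castAdd n))).findIdx (fun B => decide (Fin.castAdd n i ∈ B))
        = L.findIdx (fun B => decide (i ∈ B)) := by
    intro L
    induction L with
    | nil => rfl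
    | cons B L ih => simp [List.findIdx_cons, castAdd_mem_image, ih]
  exact this W

lemma extendsSched_copySched {W : List (Finset (Fin n))} :
    extendsSched W (copySched W) (Fin.castAdd n) := by
  intro i i'
  rw [stepOf_copySched, stepOf_copySched]
  omega

lemma copy_foldl {F : Conf n → Conf n} :
    ∀ (L : List (Finset (Fin n))) (zc : Conf (n + n)) (x : Conf n),
      (∀ t, zc (Fin.natAdd n t) = x t) →
      (∀ i : Fin n,
        ((L.map (fun B => B.image (Fin.castAdd n))).foldl (fun y B => updSet (copyF F) B y) zc)
            (Fin.castAdd n i)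
          = if i ∈ L.foldr (· ∪ ·) ∅ then F x i else zc (Fin.castAdd n i)) := by
  intro L
  induction L with
  | nil => intro zc x hzc i; simp
  | cons B L ih =>
    intro zc x hzc i
    set zc' := updSet (copyF F) (B.image (Fin.castAdd n)) zc with hzc'def
    have hnat : ∀ t, zc' (Fin.natAdd n t) = x t := by
      intro t
      rw [hzc'def, updSet]
      have : Fin.natAdd n t ∉ B.image (Fin.castAdd n) := by
        rw [Finset.mem_image]
        rintro ⟨a, _, ha⟩
        have := congrArg Fin.val ha
        simp [Fin.castAdd, Fin.natAdd] at this
        omega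
      rw [if_neg this]
      exact hzc t
    have hcast : ∀ j : Fin n, zc' (Fin.castAdd n j) = if j ∈ B then F x j else zc (Fin.castAdd n j) := by
      intro j
      rw [hzc'def, updSet]
      simp only [castAdd_mem_image]
      by_cases hj : j ∈ B
      · rw [if_pos hj, if_pos hj, copyF, dif_pos (by simp [Fin.castAdd] : ((Fin.castAdd n j : Fin (n+n)) : ℕ) < n)]
        congr 1
        · funext t; exact hzc t
      · rw [if_neg hj, if_neg hj]
    have := ih zc' x hnat i
    rw [List.map_cons, List.foldl_cons, ← hzc'def, this, hcast i]
    simp only [List.foldr_cons, Finset.mem_union]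
    by_cases h1 : i ∈ L.foldr (· ∪ ·) ∅ <;> by_cases h2 : i ∈ B <;> simp [h1, h2]

lemma simulates_copySched {F : Conf n → Conf n} {W : List (Finset (Fin n))}
    (hW : isSchedule W) : simulates (copyF F) (copySched W) F (Fin.castAdd n) := by
  intro z
  funext i
  have hz1 : ∀ t, updSet (copyF F) (copyBlock n) z (Fin.natAdd n t) = z (Fin.castAdd n t) := by
    intro t
    rw [updSet, if_pos (mem_copyBlock.mpr (by simp [Fin.natAdd]))]
    rw [copyF, dif_neg (by simp [Fin.natAdd])]
    congr 1
    ext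
    simp [Fin.natAdd, Fin.castAdd]
  have key := copy_foldl (F := F) W (updSet (copyF F) (copyBlock n) z) (fun t => z (Fin.castAdd n t)) hz1 i
  have : runSched (copyF F) (copySched W) z (Fin.castAdd n i)
      = if i ∈ W.foldr (· ∪ ·) ∅ then F (fun t => z (Fin.castAdd n t)) i
        else updSet (copyF F) (copyBlock n) z (Fin.castAdd n i) := by
    rw [runSched, copySched, List.foldl_cons]
    exact key
  rw [this, hW.2.2, if_pos (Finset.mem_univ i)]

lemma kappa_le {F : Conf n → Conf n} {W : List (Finset (Fin n))} (hn : 0 < n)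
    (hW : isSchedule W) : kappa F W ≤ n := by
  apply Nat.sInf_le
  exact ⟨Fin.castAdd n, Fin.castAdd_injective _ _, copySched W,
    isSchedule_copySched hn hW, extendsSched_copySched, copyF F, simulates_copySched hW⟩

end Copy

lemma kappa_lower {n k : ℕ} (h : Fin n → Fin (n + k)) (hinj : Function.Injective h)
    (W' : List (Finset (Fin (n + k)))) (hW' : isSchedule W')
    (hext : extendsSched (seqSched n) W' h)
    (F' : Conf (n + k) → Conf (n + k)) (hsim : simulates F' W' (hardF n) h) :
    n / 2 ≤ k := by
  classical
  by_contra hk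
  push_neg at hk
  set q := n / 2 with hq
  -- the image of h
  set s : Finset (Fin (n + k)) := Finset.univ.image h with hs
  -- embedded configurations
  set z : Conf q → Conf (n + k) := fun y => Function.extend h (emb n y) (fun _ => false) with hzdef
  have hz_app : ∀ y (j : Fin n), z y (h j) = emb n y j := fun y j => hinj.extend_apply _ _ j
  have hz_proj : ∀ y, (fun i => z y (h i)) = emb n y := fun y => funext (hz_app y)
  have run_eq : ∀ y (j : Fin n), runSched F' W' (z y) (h j) = hardF n (emb n y) j := by
    intro y j
    calc runSched F' W' (z y) (h j) = hardF n (fun i => z y (h i)) j := congrFun (hsim (z y)) j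
    _ = hardF n (emb n y) j := by rw [hz_proj]
  -- the coloring
  set color : Conf q → ({v : Fin (n + k) // v ∉ s} → Bool) :=
    fun y v => runSched F' W' (z y) v.1 with hcolor
  have hcard2 : Fintype.card {v : Fin (n + k) // v ∉ s} = k := by
    have h1 := Fintype.card_subtype_compl (fun v : Fin (n + k) => v ∈ s)
    have h2 : Fintype.card {v : Fin (n + k) // v ∈ s} = n :=
      (Fintype.card_congr (Equiv.refl _)).trans ((Fintype.card_coe s).trans
        (by rw [hs, Finset.card_image_of_injective _ hinj, Finset.card_univ, Fintype.card_fin]))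
    rw [h1, h2, Fintype.card_fin]
    omega
  have hcard : Fintype.card ({v : Fin (n + k) // v ∉ s} → Bool) < Fintype.card (Conf q) := by
    rw [Fintype.card_fun, Fintype.card_fun, hcard2, Fintype.card_fin, Fintype.card_bool]
    exact Nat.pow_lt_pow_right (by norm_num) hk
  obtain ⟨y, y', hne, hcol⟩ := Fintype.exists_ne_map_eq_of_card_lt color hcard
  -- largest differing index
  set D : Finset (Fin q) := Finset.filter (fun t => y t ≠ y' t) Finset.univ with hD
  have hDne : D.Nonempty := by
    obtain ⟨t, ht⟩ := Function.ne_iff.mp hne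
    exact ⟨t, by simp [hD, ht]⟩
  set d : Fin q := D.max' hDne with hdd
  have hdne : y d ≠ y' d := by
    have := D.max'_mem hDne
    simp only [hD, Finset.mem_filter] at this
    exact this.2
  have hgt : ∀ t : Fin q, d.val < t.val → y t = y' t := by
    intro t ht
    by_contra hc
    have : t ≤ d := Finset.le_max' D t (by simp [hD, hc])
    rw [Fin.le_def] at this
    omega
  set i : ℕ := d.val + 1 with hi
  have hiq : i ≤ q := d.isLt
  -- the cut point in W'
  set t' : ℕ := (Finset.filter (fun j : Fin n => j.val < i) Finset.univ).sup
      (fun j => stepOf W' (h j) + 1) with ht'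
  have hA : ∀ j : Fin n, j.val < i → stepOf W' (h j) < t' := by
    intro j hj
    have hmem : j ∈ Finset.filter (fun j : Fin n => j.val < i) Finset.univ :=
      Finset.mem_filter.mpr ⟨Finset.mem_univ j, hj⟩
    have h2 : stepOf W' (h j) + 1 ≤ t' := Finset.le_sup (f := fun j => stepOf W' (h j) + 1) hmem
    omega
  have hB : ∀ v : Fin (n + k), stepOf W' v < t' →
      ∃ j : Fin n, j.val < i ∧ stepOf W' v ≤ stepOf W' (h j) := by
    intro v hv
    rw [ht', Finset.lt_sup_iff] at hv
    obtain ⟨j, hj, hjv⟩ := hv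
    exact ⟨j, (Finset.mem_filter.mp hj).2, by omega⟩
  -- the two partial runs agree at time t'
  have claim : pr F' W' t' (z y) = pr F' W' t' (z y') := by
    funext v
    by_cases hc : stepOf W' v < t'
    · rw [pr_eq_run hW' hc, pr_eq_run hW' hc]
      by_cases hvs : v ∈ s
      · obtain ⟨j, -, rfl⟩ := Finset.mem_image.mp hvs
        rw [run_eq y, run_eq y']
        obtain ⟨j', hj', hle2⟩ := hB (h j) hc
        have hjj : j.val ≤ j'.val := by
          have := (hext j j').mpr hle2
          rwa [stepOf_seqSched, stepOf_seqSched] at this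
        have hjq : j.val < n / 2 := by omega
        rw [hardF_low _ hjq, hardF_low _ hjq]
      · exact congrFun hcol ⟨v, hvs⟩
    · rw [pr_eq_self (Nat.le_of_not_lt hc), pr_eq_self (Nat.le_of_not_lt hc)]
      by_cases hvs : v ∈ s
      · obtain ⟨j, -, rfl⟩ := Finset.mem_image.mp hvs
        rw [hz_app, hz_app]
        have hji : ¬ j.val < i := fun hji => hc (hA j hji)
        rw [emb, emb]
        by_cases hjq : (j : ℕ) < n / 2
        · rw [dif_pos hjq, dif_pos hjq]
          exact hgt ⟨j, hjq⟩ (by simpa using Nat.lt_of_lt_of_le (by omega) (le_refl j.val))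
        · rw [dif_neg hjq, dif_neg hjq]
      · have hnex : ¬∃ a, h a = v := by
          intro ⟨a, ha⟩
          exact hvs (ha ▸ Finset.mem_image_of_mem h (Finset.mem_univ a))
        rw [hzdef]
        simp only [Function.extend_apply' _ _ _ hnex]
  have hruns : runSched F' W' (z y) = runSched F' W' (z y') := runSched_eq_of_pr_eq claim
  have hFF : hardF n (emb n y) = hardF n (emb n y') := by
    funext j
    rw [← run_eq y j, ← run_eq y' j, hruns]
  exact hne (hardF_emb_inj hFF)

lemma kappa_hard {n : ℕ} (hn : 0 < n) : n / 2 ≤ kappa (hardF n) (seqSched n) := by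
  rw [kappa]
  apply le_csInf
  · exact ⟨n, Fin.castAdd n, Fin.castAdd_injective _ _, copySched (seqSched n),
      isSchedule_copySched hn (isSchedule_seqSched n), extendsSched_copySched,
      copyF (hardF n), simulates_copySched (isSchedule_seqSched n)⟩
  · rintro k ⟨h, hinj, W', hW', hext, F', hsim⟩
    exact kappa_lower h hinj W' hW' hext F' hsim

theorem stmt5 (n : ℕ) :
    n / 2 ≤ sSup {k : ℕ | ∃ F : Conf n → Conf n, ∃ W : List (Finset (Fin n)),
      isSchedule W ∧ kappa F W = k} := by
  rcases Nat.eq_zero_or_pos n with rfl | hn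
  · simp
  · have hbdd : BddAbove {k : ℕ | ∃ F : Conf n → Conf n, ∃ W : List (Finset (Fin n)),
        isSchedule W ∧ kappa F W = k} := by
      refine ⟨n, ?_⟩
      rintro k ⟨F, W, hW, rfl⟩
      exact kappa_le hn hW
    have hmem : kappa (hardF n) (seqSched n) ∈ {k : ℕ | ∃ F : Conf n → Conf n,
        ∃ W : List (Finset (Fin n)), isSchedule W ∧ kappa F W = k} :=
      ⟨hardF n, seqSched n, isSchedule_seqSched n, rfl⟩
    exact le_trans (kappa_hard hn) (le_csSup hbdd hmem)
end

section
/- Let F: B^n → B^n with the simple sequential schedule W = ({0},...,{n-1}). For all x ∈ B^n, |{F(x') : (x,x') ∈ NECC}| ≤ 2^{⌈n/2⌉+1} − 2. -/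
lemma mem_foldr_union {n} (L : List (Finset (Fin n))) (j : Fin n) :
    j ∈ L.foldr (· ∪ ·) ∅ ↔ ∃ B ∈ L, j ∈ B := by
  induction L with
  | nil => simp
  | cons a t ih => simp [ih]

lemma mem_prefUnion_seq {n} (i : ℕ) (j : Fin n) :
    j ∈ prefUnion (seqSched n) i ↔ (j : ℕ) < i := by
  rw [prefUnion, mem_foldr_union, seqSched]
  constructor
  · rintro ⟨B, hB, hjB⟩
    rw [← List.map_take] at hB
    obtain ⟨a, ha, rfl⟩ := List.mem_map.1 hB
    simp only [Finset.mem_singleton] at hjB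
    subst hjB
    obtain ⟨m, hm, rfl⟩ := List.mem_take_iff_getElem.1 ha
    simp
    omega
  · intro h
    refine ⟨{j}, ?_, by simp⟩
    rw [← List.map_take]
    apply List.mem_map_of_mem
    rw [List.mem_take_iff_getElem]
    refine ⟨(j : ℕ), by simp; omega, by simp⟩

theorem stmt15 {n : ℕ} (F : Conf n → Conf n) (x : Conf n) :
    {y : Conf n | ∃ x', (gnecc F (seqSched n)).Adj x x' ∧ F x' = y}.ncard ≤
      2 ^ ((n + 1) / 2 + 1) - 2 := by
  rcases Nat.eq_zero_or_pos n with rfl | hn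
  · have : {y : Conf 0 | ∃ x', (gnecc F (seqSched 0)).Adj x x' ∧ F x' = y} = ∅ := by
      ext y
      simp only [Set.mem_setOf_eq, Set.mem_empty_iff_false, iff_false]
      rintro ⟨x', ⟨hne, _⟩, _⟩
      exact hne (by funext j; exact absurd j.2 (by omega))
    rw [this]; simp
  set k := (n + 1) / 2 with hk
  have hkn : k ≤ n := by omega
  set S := {y : Conf n | ∃ x', (gnecc F (seqSched n)).Adj x x' ∧ F x' = y} with hS
  set A : Set (Conf n) := {y | y ≠ F x ∧ ∀ j : Fin n, (j : ℕ) < k → y j = F x j} with hA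
  set B : Set (Conf n) := {y | y ≠ F x ∧
      ∃ z : Conf n, z ≠ x ∧ (∀ j : Fin n, k ≤ (j : ℕ) → z j = x j) ∧ F z = y} with hB
  have hsub : S ⊆ A ∪ B := by
    rintro y ⟨x', ⟨hne, i, hi, heq⟩, rfl⟩
    have hlen : (seqSched n).length = n := by simp [seqSched]
    rw [hlen] at hi
    have hval : ∀ j : Fin n, updSet F (prefUnion (seqSched n) i) x j =
        updSet F (prefUnion (seqSched n) i) x' j := fun j => congrFun heq j
    by_cases hik : k ≤ i
    · left
      refine ⟨hne.symm, fun j hj => ?_⟩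
      have hji : (j : ℕ) < i := lt_of_lt_of_le hj hik
      have := hval j
      rw [updSet, updSet] at this
      simp only [(mem_prefUnion_seq i j).2 hji, if_pos] at this
      exact this.symm
    · right
      refine ⟨hne.symm, x', ?_, fun j hj => ?_, rfl⟩
      · rintro rfl; exact hne rfl
      · have hji : ¬ ((j : ℕ) < i) := by omega
        have := hval j
        rw [updSet, updSet] at this
        simp only [mem_prefUnion_seq, hji, if_false] at this
        exact this.symm
  have hAcard : A.ncard ≤ 2 ^ (n - k) - 1 := by
    have h1 : A.ncard + 1 ≤ 2 ^ (n - k) := by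
      have : (insert (F x) A).ncard ≤ 2 ^ (n - k) := by
        have hinj : Set.InjOn (fun y : Conf n => fun t : Fin (n - k) => y ⟨k + t, by omega⟩)
            (insert (F x) A) := by
          intro y₁ h₁ y₂ h₂ hf
          have key : ∀ y ∈ insert (F x) A, ∀ j : Fin n, k ≤ (j : ℕ) → y j = F x j → True := fun _ _ _ _ _ => trivial
          funext j
          by_cases hj : (j : ℕ) < k
          · have e₁ : y₁ j = F x j := by
              rcases h₁ with rfl | h₁; · rfl
              · exact h₁.2 j hj
            have e₂ : y₂ j = F x j := by
              rcases h₂ with rfl | h₂; · rfl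
              · exact h₂.2 j hj
            rw [e₁, e₂]
          · have : j = (⟨k + (⟨(j : ℕ) - k, by omega⟩ : Fin (n - k)), by omega⟩ : Fin n) := by
              ext; simp; omega
            rw [this]
            exact congrFun hf ⟨(j : ℕ) - k, by omega⟩
        calc (insert (F x) A).ncard ≤ (Set.univ : Set (Fin (n - k) → Bool)).ncard :=
              Set.ncard_le_ncard_of_injOn _ (fun _ _ => trivial) hinj (Set.finite_univ)
          _ = 2 ^ (n - k) := by
              rw [Set.ncard_univ, Nat.card_eq_fintype_card]; simp
      have hmem : F x ∉ A := fun h => h.1 rfl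
      rw [Set.ncard_insert_of_notMem hmem (Set.toFinite A)] at this
      omega
    omega
  have hBcard : B.ncard ≤ 2 ^ k - 1 := by
    set Z : Set (Conf n) := {z | z ≠ x ∧ ∀ j : Fin n, k ≤ (j : ℕ) → z j = x j} with hZ
    have hBZ : B ⊆ F '' Z := by
      rintro y ⟨_, z, hz1, hz2, rfl⟩
      exact ⟨z, ⟨hz1, hz2⟩, rfl⟩
    have hZcard : Z.ncard + 1 ≤ 2 ^ k := by
      have hinj : Set.InjOn (fun z : Conf n => fun t : Fin k => z ⟨t, by omega⟩)
          (insert x Z) := by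
        intro z₁ h₁ z₂ h₂ hf
        funext j
        by_cases hj : (j : ℕ) < k
        · have : j = (⟨((⟨(j : ℕ), hj⟩ : Fin k) : ℕ), by omega⟩ : Fin n) := by ext; simp
          rw [this]
          exact congrFun hf ⟨(j : ℕ), hj⟩
        · have e₁ : z₁ j = x j := by
            rcases h₁ with rfl | h₁; · rfl
            · exact h₁.2 j (by omega)
          have e₂ : z₂ j = x j := by
            rcases h₂ with rfl | h₂; · rfl
            · exact h₂.2 j (by omega)
          rw [e₁, e₂]
      have : (insert x Z).ncard ≤ 2 ^ k := by
        calc (insert x Z).ncard ≤ (Set.univ : Set (Fin k → Bool)).ncard :=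
              Set.ncard_le_ncard_of_injOn _ (fun _ _ => trivial) hinj (Set.finite_univ)
          _ = 2 ^ k := by rw [Set.ncard_univ, Nat.card_eq_fintype_card]; simp
      have hmem : x ∉ Z := fun h => h.1 rfl
      rwa [Set.ncard_insert_of_notMem hmem (Set.toFinite Z)] at this
    calc B.ncard ≤ (F '' Z).ncard := Set.ncard_le_ncard hBZ (Set.toFinite _)
      _ ≤ Z.ncard := Set.ncard_image_le (Set.toFinite Z)
      _ ≤ 2 ^ k - 1 := by omega
  have hUnion : S.ncard ≤ A.ncard + B.ncard :=
    le_trans (Set.ncard_le_ncard hsub (Set.toFinite _)) (Set.ncard_union_le A B)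
  have hpow : 2 ^ (n - k) ≤ 2 ^ k := Nat.pow_le_pow_right (by norm_num) (by omega)
  have h2 : 2 ^ (k + 1) = 2 * 2 ^ k := by ring
  have hkpos : 1 ≤ 2 ^ k := Nat.one_le_two_pow
  omega
end
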